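/- A Hausdorff topological group G is ω-narrow and a strict q-space if and only if for each open neighborhood O of the identity in G there is a closed sequentially compact invariant (normal) subgroup H which is of countable character in G, such that H ⊆ O, the canonical quotient mapping p : G → G/H is sequential-perfect, and the quotient space G/H is separable and metrizable. -/

import Mathlib

open Filter Topology Set Pointwise TopologicalSpace

universe u

section Defs

variable {X : Type*}

/-- A subset `s` of a topological space is countably compact (in the ambient space) if every
countable open cover of `s` (indexed by `ℕ`) has a finite subcover. -/
def IsCountablyCompactIn [TopologicalSpace X] (s : Set X) : Prop :=
  ∀ U : ℕ → Set X, (∀ n, IsOpen (U n)) → s ⊆ ⋃ n, U n → ∃ t : Finset ℕ, s ⊆ ⋃ n ∈ t, U n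

/-- `U` is a q-sequence at `x`: a sequence of open neighbourhoods of `x` such that every
sequence of points chosen from the `U n` has an accumulation (cluster) point in `X`. -/
def IsQSequenceAt [TopologicalSpace X] (x : X) (U : ℕ → Set X) : Prop :=
  (∀ n, IsOpen (U n) ∧ x ∈ U n) ∧
    ∀ u : ℕ → X, (∀ n, u n ∈ U n) → ∃ p : X, MapClusterPt p Filter.atTop u

/-- A space is a q-space if every point has a q-sequence. -/
def QSpace (X : Type*) [TopologicalSpace X] : Prop :=
  ∀ x : X, ∃ U : ℕ → Set X, IsQSequenceAt x U

/-- A space is a strict q-space if every point has a q-sequence whose intersection is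
sequentially compact. -/
def StrictQSpace (X : Type*) [TopologicalSpace X] : Prop :=
  ∀ x : X, ∃ U : ℕ → Set X, IsQSequenceAt x U ∧ IsSeqCompact (⋂ n, U n)

/-- `U` is a strong q-sequence at `x`: a sequence of open neighbourhoods of `x` such that every
sequence of points chosen from the `U n` has a convergent subsequence. -/
def IsStrongQSequenceAt [TopologicalSpace X] (x : X) (U : ℕ → Set X) : Prop :=
  (∀ n, IsOpen (U n) ∧ x ∈ U n) ∧
    ∀ u : ℕ → X, (∀ n, u n ∈ U n) →
      ∃ (p : X) (φ : ℕ → ℕ), StrictMono φ ∧ Filter.Tendsto (u ∘ φ) Filter.atTop (nhds p)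

/-- A space is a strong q-space if every point has a strong q-sequence. -/
def StrongQSpace (X : Type*) [TopologicalSpace X] : Prop :=
  ∀ x : X, ∃ U : ℕ → Set X, IsStrongQSequenceAt x U

/-- A subset `A` is of countable character in `X` if there is a countable family of open
neighbourhoods of `A` such that every open neighbourhood of `A` contains a member of it. -/
def HasCountableCharacter [TopologicalSpace X] (A : Set X) : Prop :=
  ∃ U : ℕ → Set X, (∀ n, IsOpen (U n) ∧ A ⊆ U n) ∧
    ∀ W : Set X, IsOpen W → A ⊆ W → ∃ n, U n ⊆ W

/-- A topological group is ω-balanced if for every neighbourhood `U` of the identity there is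
a countable family `γ` of open neighbourhoods of the identity such that for every `x` some
`V ∈ γ` satisfies `xVx⁻¹ ⊆ U`. -/
def OmegaBalanced (G : Type*) [Group G] [TopologicalSpace G] : Prop :=
  ∀ U : Set G, U ∈ nhds (1 : G) → ∃ γ : Set (Set G), γ.Countable ∧
    (∀ V ∈ γ, IsOpen V ∧ (1 : G) ∈ V) ∧
    ∀ x : G, ∃ V ∈ γ, ∀ v ∈ V, x * v * x⁻¹ ∈ U

/-- A topological group is ω-narrow if for every open neighbourhood `V` of the identity there
is a countable set `A` with `A * V = G`. -/
def OmegaNarrow (G : Type*) [Group G] [TopologicalSpace G] : Prop :=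
  ∀ V : Set G, IsOpen V → (1 : G) ∈ V → ∃ A : Set G, A.Countable ∧ A * V = Set.univ

/-- A topological group is feathered if it has a nonempty compact subset of countable
character. -/
def IsFeathered (G : Type*) [Group G] [TopologicalSpace G] : Prop :=
  ∃ K : Set G, K.Nonempty ∧ IsCompact K ∧ HasCountableCharacter K

/-- A subgroup `H` of a topological group is neutral if for every open neighbourhood `U` of the
identity there is an open neighbourhood `V` of the identity with `HV ⊆ UH`. -/
def IsNeutralSubgroup {G : Type*} [Group G] [TopologicalSpace G] (H : Subgroup G) : Prop :=
  ∀ U : Set G, IsOpen U → (1 : G) ∈ U →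
    ∃ V : Set G, IsOpen V ∧ (1 : G) ∈ V ∧ (H : Set G) * V ⊆ U * (H : Set G)

end Defs

section AuxProof
variable {G : Type*} [Group G] [TopologicalSpace G] [IsTopologicalGroup G]

lemma aux_sym_sq (V : Set G) (hV : IsOpen V) (h1 : (1:G) ∈ V) :
    ∃ W : Set G, IsOpen W ∧ (1:G) ∈ W ∧ W⁻¹ = W ∧ W * W ⊆ V := by
  obtain ⟨W, hWo, hW1, hWm⟩ := exists_open_nhds_one_mul_subset (hV.mem_nhds h1)
  refine ⟨W ∩ W⁻¹, hWo.inter hWo.inv, ⟨hW1, by simpa using hW1⟩, ?_, ?_⟩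
  · simp [Set.inter_inv, Set.inter_comm]
  · exact (Set.mul_subset_mul inter_subset_left inter_subset_left).trans hWm

lemma aux_balanced (hn : OmegaNarrow G) (V : Set G) (hV : IsOpen V) (h1 : (1:G) ∈ V) :
    ∃ γ : ℕ → Set G, (∀ k, IsOpen (γ k) ∧ (1:G) ∈ γ k ∧ (γ k)⁻¹ = γ k) ∧
      ∀ x : G, ∃ k, ∀ v ∈ γ k, x * v * x⁻¹ ∈ V := by
  obtain ⟨W1, hW1o, hW11, hW1s, hW1m⟩ := aux_sym_sq V hV h1
  obtain ⟨W, hWo, hW1, hWs, hWm⟩ := aux_sym_sq W1 hW1o hW11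
  have hWsub : W ⊆ W1 := fun x hx => by
    simpa using hWm (Set.mul_mem_mul hx hW1)
  have hW3 : ∀ a b c : G, a ∈ W → b ∈ W → c ∈ W → a * b * c ∈ V := by
    intro a b c ha hb hc
    exact hW1m (Set.mul_mem_mul (hWm (Set.mul_mem_mul ha hb)) (hWsub hc))
  obtain ⟨A, hAc, hAW⟩ := hn W hWo hW1
  have hAne : A.Nonempty := by
    rcases Set.mem_mul.1 (hAW ▸ Set.mem_univ (1:G)) with ⟨a, ha, -⟩
    exact ⟨a, ha⟩
  obtain ⟨f, hf⟩ := hAc.exists_eq_range hAne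
  refine ⟨fun k => (fun g => (f k)⁻¹ * g * (f k)) ⁻¹' W, fun k => ⟨?_, ?_, ?_⟩, ?_⟩
  · exact hWo.preimage ((continuous_const.mul continuous_id).mul continuous_const)
  · simpa using hW1
  · ext v
    simp only [Set.mem_inv, Set.mem_preimage]
    constructor
    · intro h
      have h2 : ((f k)⁻¹ * v⁻¹ * f k)⁻¹ ∈ W := by rw [← hWs]; exact Set.inv_mem_inv.2 h
      simpa [mul_inv_rev, mul_assoc] using h2
    · intro h
      have h2 : ((f k)⁻¹ * v * f k)⁻¹ ∈ W := by rw [← hWs]; exact Set.inv_mem_inv.2 h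
      simpa [mul_inv_rev, mul_assoc] using h2
  · intro x
    have : x⁻¹ ∈ A * W := hAW ▸ Set.mem_univ _
    rcases Set.mem_mul.1 this with ⟨a, haA, w, hwW, haw⟩
    rcases hf ▸ haA with ⟨k, rfl⟩
    refine ⟨k, fun v hv => ?_⟩
    have hx : x = w⁻¹ * (f k)⁻¹ := by
      have := congrArg (·⁻¹) haw
      simpa [mul_inv_rev] using this.symm
    have hw' : w⁻¹ ∈ W := by rw [← hWs]; exact Set.inv_mem_inv.2 hwW
    have : w⁻¹ * ((f k)⁻¹ * v * f k) * w ∈ V := hW3 _ _ _ hw' hv hwW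
    rw [hx]
    simpa [mul_assoc, mul_inv_rev] using this
end AuxProof

section Fwd
variable {G : Type*} [Group G] [TopologicalSpace G] [IsTopologicalGroup G]

set_option maxHeartbeats 2000000 in
lemma aux_forward (hn : OmegaNarrow G) (U : ℕ → Set G)
    (hUo : ∀ n, IsOpen (U n)) (hU1 : ∀ n, (1:G) ∈ U n)
    (hUq : ∀ u : ℕ → G, (∀ n, u n ∈ U n) → ∃ p : G, MapClusterPt p Filter.atTop u)
    (hK : IsSeqCompact (⋂ n, U n))
    (O : Set G) (hO : IsOpen O) (h1O : (1:G) ∈ O) :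
    ∃ H : Subgroup G, H.Normal ∧ IsClosed (H : Set G) ∧ IsSeqCompact (H : Set G) ∧
      HasCountableCharacter (H : Set G) ∧ (H : Set G) ⊆ O ∧
      IsClosedMap (QuotientGroup.mk : G → G ⧸ H) ∧
      (∀ y : G ⧸ H, IsSeqCompact ((QuotientGroup.mk : G → G ⧸ H) ⁻¹' {y})) ∧
      SeparableSpace (G ⧸ H) ∧ MetrizableSpace (G ⧸ H) := by
  classical
  -- choice functions
  have sq' : ∀ V : Set G, ∃ W : Set G, IsOpen V → (1:G) ∈ V →
      (IsOpen W ∧ (1:G) ∈ W ∧ W⁻¹ = W ∧ W * W ⊆ V) := by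
    intro V
    by_cases h : IsOpen V ∧ (1:G) ∈ V
    · obtain ⟨W, h1, h2, h3, h4⟩ := aux_sym_sq V h.1 h.2
      exact ⟨W, fun _ _ => ⟨h1, h2, h3, h4⟩⟩
    · exact ⟨∅, fun hV h1 => absurd ⟨hV, h1⟩ h⟩
  choose sqf hsqf using sq'
  have conj' : ∀ V : Set G, ∃ γ : ℕ → Set G, IsOpen V → (1:G) ∈ V →
      ((∀ k, IsOpen (γ k) ∧ (1:G) ∈ γ k ∧ (γ k)⁻¹ = γ k) ∧
        ∀ x : G, ∃ k, ∀ v ∈ γ k, x * v * x⁻¹ ∈ V) := by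
    intro V
    by_cases h : IsOpen V ∧ (1:G) ∈ V
    · obtain ⟨γ, h1, h2⟩ := aux_balanced hn V h.1 h.2
      exact ⟨γ, fun _ _ => ⟨h1, h2⟩⟩
    · exact ⟨fun _ => ∅, fun hV h1 => absurd ⟨hV, h1⟩ h⟩
  choose conjf hconjf using conj'
  -- the seed sequence B
  set B : ℕ → Set G := fun j =>
    Nat.rec (sqf (O ∩ U 0)) (fun j Bj => sqf (Bj ∩ U (j + 1))) j with hBdef
  have hB : ∀ j, IsOpen (B j) ∧ (1:G) ∈ B j ∧ (B j)⁻¹ = B j := by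
    intro j
    induction j with
    | zero =>
      have := hsqf (O ∩ U 0) (hO.inter (hUo 0)) ⟨h1O, hU1 0⟩
      exact ⟨this.1, this.2.1, this.2.2.1⟩
    | succ j ih =>
      have := hsqf (B j ∩ U (j + 1)) (ih.1.inter (hUo (j+1))) ⟨ih.2.1, hU1 (j+1)⟩
      exact ⟨this.1, this.2.1, this.2.2.1⟩
  have hBsq0 : B 0 * B 0 ⊆ O ∩ U 0 :=
    (hsqf (O ∩ U 0) (hO.inter (hUo 0)) ⟨h1O, hU1 0⟩).2.2.2
  have hBsqS : ∀ j, B (j+1) * B (j+1) ⊆ B j ∩ U (j + 1) := fun j =>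
    (hsqf (B j ∩ U (j + 1)) ((hB j).1.inter (hUo (j+1))) ⟨(hB j).2.1, hU1 (j+1)⟩).2.2.2
  have hself : ∀ j, B j ⊆ B j * B j := fun j x hx => by
    simpa using Set.mul_mem_mul hx (hB j).2.1
  have hBU : ∀ j, B j ⊆ U j := by
    intro j
    cases j with
    | zero => exact (hself 0).trans (hBsq0.trans inter_subset_right)
    | succ j => exact (hself (j+1)).trans ((hBsqS j).trans inter_subset_right)
  have hBO : B 0 ⊆ O := (hself 0).trans (hBsq0.trans inter_subset_left)
  have hBmono : ∀ j, B (j+1) ⊆ B j := fun j =>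
    (hself (j+1)).trans ((hBsqS j).trans inter_subset_left)
  -- the countable family 𝒩
  set F : ℕ → Set (Set G) := fun n =>
    Nat.rec (Set.range B)
      (fun _ Fn => Fn ∪ (sqf '' Fn ∪ ⋃ V ∈ Fn, Set.range (conjf V))) n with hFdef
  set NN : Set (Set G) := ⋃ n, F n with hNNdef
  have hFP : ∀ n, ∀ V ∈ F n, IsOpen V ∧ (1:G) ∈ V ∧ V⁻¹ = V := by
    intro n
    induction n with
    | zero => rintro V ⟨j, rfl⟩; exact hB j
    | succ n ih =>
      rintro V (hV | hV)
      · exact ih V hV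
      · rcases hV with ⟨W, hW, rfl⟩ | hV
        · have hP := ih W hW
          have := hsqf W hP.1 hP.2.1
          exact ⟨this.1, this.2.1, this.2.2.1⟩
        · simp only [Set.mem_iUnion] at hV
          obtain ⟨W, hW, k, rfl⟩ := hV
          have hP := ih W hW
          exact (hconjf W hP.1 hP.2.1).1 k
  have hNP : ∀ V ∈ NN, IsOpen V ∧ (1:G) ∈ V ∧ V⁻¹ = V := by
    rintro V hV
    rcases Set.mem_iUnion.1 hV with ⟨n, hn'⟩
    exact hFP n V hn'
  have hBinNN : ∀ j, B j ∈ NN := fun j => Set.mem_iUnion.2 ⟨0, ⟨j, rfl⟩⟩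
  have hsqNN : ∀ V ∈ NN, sqf V ∈ NN := by
    rintro V hV
    rcases Set.mem_iUnion.1 hV with ⟨n, hn'⟩
    exact Set.mem_iUnion.2 ⟨n+1, Or.inr (Or.inl ⟨V, hn', rfl⟩)⟩
  have hconjNN : ∀ V ∈ NN, ∀ k, conjf V k ∈ NN := by
    rintro V hV k
    rcases Set.mem_iUnion.1 hV with ⟨n, hn'⟩
    exact Set.mem_iUnion.2 ⟨n+1, Or.inr (Or.inr (Set.mem_iUnion.2 ⟨V,
      Set.mem_iUnion.2 ⟨hn', ⟨k, rfl⟩⟩⟩))⟩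
  have hNNc : NN.Countable := by
    refine Set.countable_iUnion ?_
    intro n
    induction n with
    | zero => exact Set.countable_range B
    | succ n ih =>
      exact ih.union ((ih.image sqf).union (Set.Countable.biUnion ih
        fun V _ => Set.countable_range (conjf V)))
  -- the subgroup
  set Hset : Set G := ⋂₀ NN with hHdef
  have hHsub : ∀ V ∈ NN, Hset ⊆ V := fun V hV x hx => Set.mem_sInter.1 hx V hV
  have hH1 : (1:G) ∈ Hset := Set.mem_sInter.2 fun V hV => (hNP V hV).2.1
  have hsqf_spec : ∀ V ∈ NN, Hset ⊆ sqf V ∧ sqf V * sqf V ⊆ V ∧ (sqf V)⁻¹ = sqf V := by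
    intro V hV
    have hP := hNP V hV
    have h2 := hsqf V hP.1 hP.2.1
    exact ⟨hHsub _ (hsqNN V hV), h2.2.2.2, h2.2.2.1⟩
  have hmul : ∀ a b : G, a ∈ Hset → b ∈ Hset → a * b ∈ Hset := by
    intro a b ha hb
    refine Set.mem_sInter.2 fun V hV => ?_
    obtain ⟨hs, hsq, -⟩ := hsqf_spec V hV
    exact hsq (Set.mul_mem_mul (hs ha) (hs hb))
  have hinv : ∀ a : G, a ∈ Hset → a⁻¹ ∈ Hset := by
    intro a ha
    refine Set.mem_sInter.2 fun V hV => ?_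
    rw [← (hNP V hV).2.2]
    exact Set.inv_mem_inv.2 (hHsub V hV ha)
  set H : Subgroup G :=
    { carrier := Hset
      one_mem' := hH1
      mul_mem' := fun ha hb => hmul _ _ ha hb
      inv_mem' := fun ha => hinv _ ha } with hHdef'
  have hHcoe : (H : Set G) = Hset := rfl
  have hnormal : H.Normal := by
    constructor
    intro a ha g
    refine Set.mem_sInter.2 fun V hV => ?_
    have hP := hNP V hV
    obtain ⟨k, hk⟩ := (hconjf V hP.1 hP.2.1).2 g
    exact hk a (hHsub _ (hconjNN V hV k) ha)
  have hHB : ∀ j, Hset ⊆ B j := fun j => hHsub _ (hBinNN j)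
  have hHO : Hset ⊆ O := (hHB 0).trans hBO
  -- enumeration and the outer base M
  obtain ⟨Nk, hNk⟩ := hNNc.exists_eq_range ⟨B 0, hBinNN 0⟩
  have hNkNN : ∀ k, Nk k ∈ NN := fun k => hNk ▸ Set.mem_range_self k
  set M : ℕ → Set G := fun n => ⋂ k ∈ Finset.range (n+1), (Nk k ∩ B k) with hMdef
  have hMopen : ∀ n, IsOpen (M n) :=
    fun n => isOpen_biInter_finset fun k _ => ((hNP _ (hNkNN k)).1).inter (hB k).1
  have hMmem : ∀ n x, x ∈ M n ↔ ∀ k ≤ n, x ∈ Nk k ∧ x ∈ B k := by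
    intro n x
    simp only [hMdef, Set.mem_iInter, Finset.mem_range, Set.mem_inter_iff, Nat.lt_succ_iff]
  have hHM : ∀ n, Hset ⊆ M n := by
    intro n x hx
    exact (hMmem n x).2 fun k _ => ⟨hHsub _ (hNkNN k) hx, hHB k hx⟩
  have hManti : ∀ n m, n ≤ m → M m ⊆ M n := by
    intro n m hnm x hx
    exact (hMmem n x).2 fun k hk => (hMmem m x).1 hx k (hk.trans hnm)
  have hMB : ∀ n, M n ⊆ B n := fun n x hx => ((hMmem n x).1 hx n le_rfl).2
  have hMU : ∀ n, M n ⊆ U n := fun n => (hMB n).trans (hBU n)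
  have hMinv : ∀ n x, x ∈ M n → x⁻¹ ∈ M n := by
    intro n x hx
    refine (hMmem n x⁻¹).2 fun k hk => ?_
    obtain ⟨h1, h2⟩ := (hMmem n x).1 hx k hk
    constructor
    · rw [← (hNP _ (hNkNN k)).2.2]; exact Set.inv_mem_inv.2 h1
    · rw [← (hB k).2.2]; exact Set.inv_mem_inv.2 h2
  -- countable character
  have hchar : ∀ W : Set G, IsOpen W → Hset ⊆ W → ∃ n, M n ⊆ W := by
    intro W hWo hHW
    by_contra hc
    push_neg at hc
    choose x hx hxW using fun n => Set.not_subset.1 (hc n)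
    obtain ⟨q, hq⟩ := hUq x fun n => hMU n (hx n)
    have hfreq : ∀ T : Set G, IsOpen T → q ∈ T → ∀ N : ℕ, ∃ n ≥ N, x n ∈ T := by
      intro T hTo hqT N
      have := (mapClusterPt_iff_frequently.1 hq) T (hTo.mem_nhds hqT)
      exact (Filter.frequently_atTop.1 this) N
    have hqH : q ∈ Hset := by
      refine Set.mem_sInter.2 fun V hV => ?_
      rw [hNk] at hV
      obtain ⟨k, rfl⟩ := hV
      obtain ⟨hHs, hsq, hsym⟩ := hsqf_spec (Nk k) (hNkNN k)
      have : sqf (Nk k) ∈ Set.range Nk := hNk ▸ hsqNN _ (hNkNN k)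
      obtain ⟨i, hi⟩ := this
      have hTopen : IsOpen ((fun y => q⁻¹ * y) ⁻¹' sqf (Nk k)) := by
        have := (hNP _ (hsqNN _ (hNkNN k))).1
        exact this.preimage (continuous_const.mul continuous_id)
      have hqT : q ∈ (fun y => q⁻¹ * y) ⁻¹' sqf (Nk k) := by
        simp only [Set.mem_preimage, inv_mul_cancel]
        exact (hNP _ (hsqNN _ (hNkNN k))).2.1
      obtain ⟨n, hn, hxn⟩ := hfreq _ hTopen hqT i
      have hxS : x n ∈ sqf (Nk k) := by
        rw [← hi]
        exact ((hMmem n (x n)).1 (hx n) i hn).1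
      have hq2 : q⁻¹ * x n ∈ sqf (Nk k) := hxn
      have : (x n) * (q⁻¹ * x n)⁻¹ ∈ Nk k := by
        refine hsq (Set.mul_mem_mul hxS ?_)
        rw [← hsym]; exact Set.inv_mem_inv.2 hq2
      simpa [mul_inv_rev, mul_assoc] using this
    obtain ⟨n, -, hnW⟩ := hfreq W hWo (hHW hqH) 0
    exact hxW n hnW
  -- neutrality
  have hVH : ∀ n, ∃ Vn : Set G, IsOpen Vn ∧ (1:G) ∈ Vn ∧
      ∀ v ∈ Vn, ∀ h ∈ Hset, v * h ∈ M n := by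
    intro n
    refine ⟨⋂ k ∈ Finset.range (n+1), (sqf (Nk k) ∩ B (k+1)), ?_, ?_, ?_⟩
    · exact isOpen_biInter_finset fun k _ =>
        ((hNP _ (hsqNN _ (hNkNN k))).1).inter (hB (k+1)).1
    · exact Set.mem_iInter₂.2 fun k _ => ⟨(hNP _ (hsqNN _ (hNkNN k))).2.1, (hB (k+1)).2.1⟩
    · intro v hv h hh
      refine (hMmem n _).2 fun k hk => ?_
      have hvk := Set.mem_iInter₂.1 hv k (Finset.mem_range.2 (Nat.lt_succ_of_le hk))
      obtain ⟨hHs, hsq, -⟩ := hsqf_spec (Nk k) (hNkNN k)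
      constructor
      · exact hsq (Set.mul_mem_mul hvk.1 (hHs hh))
      · exact ((hBsqS k) (Set.mul_mem_mul hvk.2 (hHB (k+1) hh))).1
  -- closedness
  have hclosed : IsClosed Hset := by
    rw [← closure_subset_iff_isClosed]
    intro z hz
    refine Set.mem_sInter.2 fun V hV => ?_
    obtain ⟨hHs, hsq, hsym⟩ := hsqf_spec V hV
    have hSopen := (hNP _ (hsqNN V hV)).1
    have hS1 := (hNP _ (hsqNN V hV)).2.1
    have hTopen : IsOpen ((fun y => z⁻¹ * y) ⁻¹' sqf V) := hSopen.preimage (continuous_const.mul continuous_id)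
    have hzT : z ∈ (fun y => z⁻¹ * y) ⁻¹' sqf V := by
      simp only [Set.mem_preimage, inv_mul_cancel]; exact hS1
    obtain ⟨h, hh1, hh2⟩ := (mem_closure_iff.1 hz) _ hTopen hzT
    have h1 : z⁻¹ * h ∈ sqf V := hh1
    have : h * (z⁻¹ * h)⁻¹ ∈ V := by
      refine hsq (Set.mul_mem_mul (hHs hh2) ?_)
      rw [← hsym]; exact Set.inv_mem_inv.2 h1
    simpa [mul_inv_rev, mul_assoc] using this
  -- sequential compactness
  have hHUall : Hset ⊆ ⋂ n, U n := fun x hx => Set.mem_iInter.2 fun n => hBU n (hHB n hx)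
  have hseqH : IsSeqCompact Hset := by
    intro u hu
    obtain ⟨x, hxK, φ, hφ, hlim⟩ := hK fun n => hHUall (hu n)
    refine ⟨x, ?_, φ, hφ, hlim⟩
    exact hclosed.mem_of_tendsto hlim (Filter.Eventually.of_forall fun n => hu (φ n))
  -- quotient preliminaries
  haveI := hnormal
  haveI : IsClosed (H : Set G) := hclosed
  have hfe : ∀ a b : G, (QuotientGroup.mk a : G ⧸ H) = QuotientGroup.mk b ↔ a⁻¹ * b ∈ Hset :=
    fun a b => QuotientGroup.eq
  have hopenmk : IsOpenMap (QuotientGroup.mk : G → G ⧸ H) := QuotientGroup.isOpenMap_coe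
  have hcontmk : Continuous (QuotientGroup.mk : G → G ⧸ H) := QuotientGroup.continuous_mk
  -- closed map
  have hclosedmap : IsClosedMap (QuotientGroup.mk : G → G ⧸ H) := by
    intro C hC
    rw [← isOpen_compl_iff]
    rw [isOpen_iff_forall_mem_open]
    intro y hy
    obtain ⟨g, rfl⟩ := QuotientGroup.mk_surjective y
    have hW0 : Hset ⊆ (fun x => g * x) ⁻¹' Cᶜ := by
      intro h hh
      simp only [Set.mem_preimage, Set.mem_compl_iff]
      intro hgC
      apply hy
      exact ⟨g * h, hgC, ((hfe (g*h) g).2 (by simpa using hinv _ hh)).symm ▸ rfl⟩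
    obtain ⟨n, hn⟩ := hchar _ (hC.isOpen_compl.preimage (continuous_const.mul continuous_id))
      hW0
    obtain ⟨Vn, hVno, hVn1, hVnm⟩ := hVH n
    refine ⟨QuotientGroup.mk '' ((fun x => g * x) '' Vn), ?_, ?_, ?_⟩
    · rintro z ⟨w, ⟨v, hv, rfl⟩, rfl⟩
      simp only [Set.mem_compl_iff, Set.mem_image]
      rintro ⟨c, hcC, hc⟩
      have : (g * v)⁻¹ * c ∈ Hset := (hfe _ _).1 hc.symm
      have hcform : c = g * (v * ((g * v)⁻¹ * c)) := by group
      have : v * ((g * v)⁻¹ * c) ∈ M n := hVnm v hv _ this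
      have : c ∈ Cᶜ := by
        rw [hcform]
        exact hn this
      exact this hcC
    · exact hopenmk _ ((isOpenMap_mul_left g) _ hVno)
    · exact ⟨g * 1, ⟨1, hVn1, rfl⟩, by simp⟩
  -- fibers
  have hfib : ∀ y : G ⧸ H, IsSeqCompact ((QuotientGroup.mk : G → G ⧸ H) ⁻¹' {y}) := by
    intro y
    obtain ⟨g, rfl⟩ := QuotientGroup.mk_surjective y
    intro u hu
    have hmem : ∀ n, g⁻¹ * u n ∈ Hset := by
      intro n
      have : (QuotientGroup.mk (u n) : G ⧸ H) = QuotientGroup.mk g := hu n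
      have h2 : g⁻¹ * u n ∈ H := (hfe g (u n)).1 this.symm
      exact h2
    obtain ⟨hh, hhH, φ, hφ, hlim⟩ := hseqH hmem
    refine ⟨g * hh, ?_, φ, hφ, ?_⟩
    · show (QuotientGroup.mk (g * hh) : G ⧸ H) = QuotientGroup.mk g
      exact (hfe _ _).2 (by simpa using hinv _ hhH)
    · have : Filter.Tendsto (fun k => g * (g⁻¹ * u (φ k))) Filter.atTop (nhds (g * hh)) :=
        (hlim.const_mul g)
      simpa [mul_assoc, Function.comp_def] using this
  -- separability
  obtain ⟨A, hAc, hAM⟩ : ∃ A : ℕ → Set G, (∀ m, (A m).Countable) ∧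
      (∀ m, A m * M m = Set.univ) := by
    have := fun m => hn (M m) (hMopen m) (hHM m hH1)
    choose A h1 h2 using this
    exact ⟨A, h1, h2⟩
  set D : Set (G ⧸ H) := ⋃ m, (fun a => QuotientGroup.mk a⁻¹) '' A m with hDdef
  have hDc : D.Countable := Set.countable_iUnion fun m => (hAc m).image _
  have hDdense : Dense D := by
    rw [dense_iff_inter_open]
    intro Wq hWq hWqne
    obtain ⟨y, hy⟩ := hWqne
    obtain ⟨g, rfl⟩ := QuotientGroup.mk_surjective y
    have hW0o : IsOpen ((fun x => x * g) ⁻¹' (QuotientGroup.mk ⁻¹' Wq)) :=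
      (hWq.preimage hcontmk).preimage (continuous_id.mul continuous_const)
    have hW0H : Hset ⊆ (fun x => x * g) ⁻¹' (QuotientGroup.mk ⁻¹' Wq) := by
      intro h hh
      simp only [Set.mem_preimage]
      have : (QuotientGroup.mk (h * g) : G ⧸ H) = QuotientGroup.mk g := by
        refine (hfe _ _).2 ?_
        have h3 : g⁻¹ * h⁻¹ * (g⁻¹)⁻¹ ∈ Hset := hnormal.conj_mem _ (hinv _ hh) g⁻¹
        simpa [mul_assoc, mul_inv_rev] using h3
      rw [this]; exact hy
    obtain ⟨m, hm⟩ := hchar _ hW0o hW0H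
    have : g⁻¹ ∈ A m * M m := (hAM m) ▸ Set.mem_univ _
    obtain ⟨a, haA, v, hvM, hav⟩ := Set.mem_mul.1 this
    have hainv : a⁻¹ = v * g := by
      have := congrArg (·⁻¹) hav
      simp only [mul_inv_rev, inv_inv] at this
      rw [← this]
      have h2 := congrArg (fun z => z * g) (congrArg (·⁻¹) hav)
      simp [mul_inv_rev, mul_assoc] at h2 ⊢
      try exact h2.symm
      try exact h2
    refine ⟨QuotientGroup.mk a⁻¹, ?_, Set.mem_iUnion.2 ⟨m, a, haA, rfl⟩⟩
    rw [hainv]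
    exact hm hvM
  have hsep : SeparableSpace (G ⧸ H) := ⟨⟨D, hDc, hDdense⟩⟩
  -- second countability and metrizability
  set S : ℕ → Set (G ⧸ H) := fun m => QuotientGroup.mk '' M m with hSdef
  have hSopen : ∀ m, IsOpen (S m) := fun m => hopenmk _ (hMopen m)
  have hS1 : ∀ m, (1 : G ⧸ H) ∈ S m := fun m => ⟨1, hHM m hH1, by simp⟩
  have hSinv : ∀ m (q : G ⧸ H), q ∈ S m → q⁻¹ ∈ S m := by
    rintro m q ⟨x, hx, rfl⟩
    exact ⟨x⁻¹, hMinv m x hx, by simp⟩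
  have hSbase : ∀ V : Set (G ⧸ H), IsOpen V → (1 : G ⧸ H) ∈ V → ∃ m, S m ⊆ V := by
    intro V hVo hV1
    have hpre : Hset ⊆ QuotientGroup.mk ⁻¹' V := by
      intro h hh
      simp only [Set.mem_preimage]
      have : (QuotientGroup.mk h : G ⧸ H) = QuotientGroup.mk 1 := (hfe _ _).2 (by simpa using hinv _ hh)
      rw [show (QuotientGroup.mk 1 : G ⧸ H) = 1 from rfl] at this
      rw [this]; exact hV1
    obtain ⟨m, hm⟩ := hchar _ (hVo.preimage hcontmk) hpre
    exact ⟨m, Set.image_subset_iff.2 hm⟩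
  set Bas : Set (Set (G ⧸ H)) :=
    ⋃ d ∈ D, Set.range (fun m => (fun q => d * q) '' S m) with hBasdef
  have hBasc : Bas.Countable := hDc.biUnion fun d _ => Set.countable_range _
  have hBasis : TopologicalSpace.IsTopologicalBasis Bas := by
    refine TopologicalSpace.isTopologicalBasis_of_isOpen_of_nhds ?_ ?_
    · rintro u hu
      simp only [hBasdef, Set.mem_iUnion] at hu
      obtain ⟨d, hd, m, rfl⟩ := hu
      exact (isOpenMap_mul_left d) _ (hSopen m)
    · intro a u hau huo
      have hV1o : IsOpen ((fun q => a * q) ⁻¹' u) :=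
        huo.preimage (continuous_const.mul continuous_id)
      have hV11 : (1 : G ⧸ H) ∈ (fun q => a * q) ⁻¹' u := by
        simp only [Set.mem_preimage, mul_one]; exact hau
      obtain ⟨W2, hW2o, hW21, hW2s, hW2m⟩ := aux_sym_sq _ hV1o hV11
      obtain ⟨m, hm⟩ := hSbase W2 hW2o hW21
      have hne : ((fun q => a * q) '' S m).Nonempty := ⟨a * 1, 1, hS1 m, rfl⟩
      obtain ⟨d, hd1, hd2⟩ := hDdense.inter_open_nonempty _
        ((isOpenMap_mul_left a) _ (hSopen m)) hne
      obtain ⟨s0, hs0, rfl⟩ := hd1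
      refine ⟨(fun q => (a * s0) * q) '' S m, ?_, ?_, ?_⟩
      · simp only [hBasdef, Set.mem_iUnion]
        exact ⟨a * s0, hd2, m, rfl⟩
      · exact ⟨s0⁻¹, hSinv m s0 hs0, by simp [mul_assoc]⟩
      · rintro z ⟨s, hs, rfl⟩
        have : s0 * s ∈ (fun q => a * q) ⁻¹' u := hW2m (Set.mul_mem_mul (hm hs0) (hm hs))
        simpa [mul_assoc] using this
  haveI : SecondCountableTopology (G ⧸ H) := hBasis.secondCountableTopology hBasc
  haveI : T3Space (G ⧸ H) := inferInstance
  have hmetr : MetrizableSpace (G ⧸ H) := inferInstance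
  exact ⟨H, hnormal, hclosed, hseqH, ⟨M, fun n => ⟨hMopen n, hHM n⟩, hchar⟩, hHO,
    hclosedmap, hfib, hsep, hmetr⟩
end Fwd

theorem omegaNarrow_and_strictQSpace_iff (G : Type*) [Group G] [TopologicalSpace G] [IsTopologicalGroup G] [T2Space G] :
    (OmegaNarrow G ∧ StrictQSpace G) ↔
      ∀ O : Set G, IsOpen O → (1 : G) ∈ O →
        ∃ H : Subgroup G, H.Normal ∧ IsClosed (H : Set G) ∧ IsSeqCompact (H : Set G) ∧
          HasCountableCharacter (H : Set G) ∧ (H : Set G) ⊆ O ∧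
          IsClosedMap (QuotientGroup.mk : G → G ⧸ H) ∧
          (∀ y : G ⧸ H, IsSeqCompact ((QuotientGroup.mk : G → G ⧸ H) ⁻¹' {y})) ∧
          SeparableSpace (G ⧸ H) ∧ MetrizableSpace (G ⧸ H) := by
  constructor
  · rintro ⟨hn, hq⟩ O hO h1O
    obtain ⟨U, ⟨hUprop, hUq⟩, hK⟩ := hq 1
    exact aux_forward hn U (fun n => (hUprop n).1) (fun n => (hUprop n).2) hUq hK O hO h1O
  · intro h
    constructor
    · intro V hV h1V
      obtain ⟨V₀, hV₀o, hV₀1, hV₀s, hV₀m⟩ := aux_sym_sq V hV h1V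
      obtain ⟨H, hnorm, hcl, hsc, hcc, hsub, hcm, hfib, hsep, hmet⟩ := h V₀ hV₀o hV₀1
      obtain ⟨D, hDc, hDd⟩ := hsep.1
      have hsec : ∀ y : G ⧸ H, ∃ g : G, QuotientGroup.mk g = y := QuotientGroup.mk_surjective
      choose sec hsecp using hsec
      refine ⟨sec '' D, hDc.image _, ?_⟩
      rw [Set.eq_univ_iff_forall]
      intro g
      have hopenmk : IsOpenMap (QuotientGroup.mk : G → G ⧸ H) := QuotientGroup.isOpenMap_coe
      have hOo : IsOpen ((QuotientGroup.mk : G → G ⧸ H) '' ((fun x => g * x) '' V₀)) :=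
        hopenmk _ ((isOpenMap_mul_left g) _ hV₀o)
      have hne : ((QuotientGroup.mk : G → G ⧸ H) '' ((fun x => g * x) '' V₀)).Nonempty :=
        ⟨QuotientGroup.mk (g * 1), ⟨g * 1, ⟨1, hV₀1, rfl⟩, rfl⟩⟩
      obtain ⟨d, hd1, hd2⟩ := hDd.inter_open_nonempty _ hOo hne
      obtain ⟨w, ⟨v, hv, rfl⟩, rfl⟩ := hd1
      set a := sec (QuotientGroup.mk (g * v)) with ha
      have hmk : (QuotientGroup.mk a : G ⧸ H) = QuotientGroup.mk (g * v) := hsecp _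
      have ht : a⁻¹ * (g * v) ∈ H := QuotientGroup.eq.1 hmk
      have hgeq : g = a * ((a⁻¹ * (g * v)) * v⁻¹) := by group
      have hmem : (a⁻¹ * (g * v)) * v⁻¹ ∈ V := by
        refine hV₀m (Set.mul_mem_mul (hsub ht) ?_)
        rw [← hV₀s]; exact Set.inv_mem_inv.2 hv
      rw [hgeq]
      exact Set.mul_mem_mul ⟨QuotientGroup.mk (g * v), hd2, rfl⟩ hmem
    · intro x
      obtain ⟨H, hnorm, hcl, hsc, hcc, hsub, hcm, hfib, hsep, hmet⟩ :=
        h Set.univ isOpen_univ (Set.mem_univ 1)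
      haveI := hmet
      letI : MetricSpace (G ⧸ H) := TopologicalSpace.metrizableSpaceMetric _
      set p : G → G ⧸ H := QuotientGroup.mk with hp
      have hcont : Continuous p := QuotientGroup.continuous_mk
      set y₀ : G ⧸ H := p x with hy₀
      set s : ℕ → Set (G ⧸ H) := fun n => Metric.ball y₀ (1/(n+1)) with hs
      have hpos : ∀ n : ℕ, (0:ℝ) < 1/(n+1) := fun n => by positivity
      have hiInter : (⋂ n, p ⁻¹' s n) = p ⁻¹' {y₀} := by
        ext z
        simp only [Set.mem_iInter, Set.mem_preimage, hs, Metric.mem_ball, Set.mem_singleton_iff]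
        constructor
        · intro hz
          rw [← dist_eq_zero]
          by_contra hne
          have hpos' : 0 < dist (p z) y₀ := lt_of_le_of_ne dist_nonneg (Ne.symm hne)
          obtain ⟨n, hn⟩ := exists_nat_one_div_lt hpos'
          exact absurd (hz n) (not_lt.2 hn.le)
        · intro hz n
          rw [hz]
          simpa using hpos n
      refine ⟨fun n => p ⁻¹' s n, ⟨fun n => ⟨Metric.isOpen_ball.preimage hcont, ?_⟩, ?_⟩, ?_⟩
      · simp only [Set.mem_preimage, hs, Metric.mem_ball, hy₀, dist_self]
        exact hpos n
      · intro u hu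
        have hstep : ∀ N : ℕ, ∃ z, z ∈ closure (u '' Set.Ici N) ∧ p z = y₀ := by
          intro N
          have hy₀cl : y₀ ∈ closure (p '' (u '' Set.Ici N)) := by
            rw [mem_closure_iff_nhds]
            intro t ht
            obtain ⟨ε, hε, hball⟩ := Metric.mem_nhds_iff.1 ht
            obtain ⟨n₀, hn₀⟩ := exists_nat_one_div_lt hε
            refine ⟨p (u (max N n₀)), hball ?_, ⟨u (max N n₀), ⟨max N n₀, le_max_left N n₀, rfl⟩, rfl⟩⟩
            have h1 : dist (p (u (max N n₀))) y₀ < 1/((max N n₀ : ℕ)+1) := by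
              have := hu (max N n₀)
              simpa [hs, Metric.mem_ball] using this
            refine Metric.mem_ball.2 (h1.trans_le (le_trans ?_ hn₀.le))
            have : ((n₀:ℝ)+1) ≤ ((max N n₀ : ℕ):ℝ)+1 := by
              have : (n₀:ℝ) ≤ ((max N n₀ : ℕ):ℝ) := by exact_mod_cast le_max_right N n₀
              linarith
            exact one_div_le_one_div_of_le (by positivity) this
          have := hcm.closure_image_subset (u '' Set.Ici N) hy₀cl
          obtain ⟨z, hz1, hz2⟩ := this
          exact ⟨z, hz1, hz2⟩
        choose z hzc hzp using hstep
        have hzfib : ∀ N, z N ∈ p ⁻¹' {y₀} := fun N => by simp [hzp N]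
        obtain ⟨zl, hzlmem, ψ, hψ, hψlim⟩ := hfib y₀ hzfib
        have hzlcl : ∀ N, zl ∈ closure (u '' Set.Ici N) := by
          intro N
          refine isClosed_closure.mem_of_tendsto hψlim ?_
          filter_upwards [Filter.eventually_ge_atTop N] with k hk
          have hψk : N ≤ ψ k := le_trans hk hψ.le_apply
          exact closure_mono (Set.image_mono (f := u) (Set.Ici_subset_Ici.2 hψk)) (hzc (ψ k))
        refine ⟨zl, ?_⟩
        rw [mapClusterPt_iff_frequently]
        intro t ht
        rw [Filter.frequently_atTop]
        intro N
        obtain ⟨w, hw1, hw2⟩ := mem_closure_iff_nhds.1 (hzlcl N) t ht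
        obtain ⟨n, hn, rfl⟩ := hw2
        exact ⟨n, hn, hw1⟩
      · have h2 : IsSeqCompact (⋂ n, p ⁻¹' s n) := hiInter ▸ hfib y₀
        exact h2
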